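/- Under the hypotheses of the interference-alignment setup, for every i in {2,...,k} and for every vector v in the column space of the i-th block of Γ_3, v lies in the column space of the i-th block of [Γ_1 | Γ_2]; moreover the i-th block of Γ_1 is zero, so the i-th block of Γ_3 has column space contained in the column space of the i-th block of Γ_2. In particular, if Γ_2 consists of k-1 single columns γ^{(2)},...,γ^{(k)} where γ^{(j)} has nonzero entries only in block j, then each interference block of Γ_3 has rank at most 1 (interference alignment is necessary). -/

import Mathlib

/-- Necessity of interference alignment: each interference block of `Γ₃` has
column space contained in that of the corresponding block of `Γ₂`, hence rank at most 1. -/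
theorem interference_alignment_necessary
    {F : Type*} [Field F] [Fintype F] {k α : ℕ} (hk : 0 < k)
    (Γ₁ : Matrix (Fin k × Fin α) (Fin α) F)
    (Γ₂ : Matrix (Fin k × Fin α) {j : Fin k // j ≠ (⟨0, hk⟩ : Fin k)} F)
    (Γ₃ : Matrix (Fin k × Fin α) (Fin α) F)
    (h1 : ∀ i a j, Γ₁ (i, a) j = if i = (⟨0, hk⟩ : Fin k) ∧ a = j then 1 else 0)
    (h2 : ∀ (i : Fin k) (a : Fin α) (j : {j : Fin k // j ≠ (⟨0, hk⟩ : Fin k)}),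
      i ≠ j.val → Γ₂ (i, a) j = 0)
    (h3 : Submodule.span F (Set.range fun j => fun i => Γ₁ i j) ≤
          Submodule.span F (Set.range fun j => fun i => (Matrix.fromCols Γ₂ Γ₃) i j)) :
    ∀ i : Fin k, i ≠ (⟨0, hk⟩ : Fin k) →
      (Submodule.span F (Set.range fun j : Fin α => fun a => Γ₃ (i, a) j) ≤
        Submodule.span F
          (Set.range fun j : {j : Fin k // j ≠ (⟨0, hk⟩ : Fin k)} => fun a => Γ₂ (i, a) j)) ∧
      (Matrix.of (fun a j => Γ₃ (i, a) j) : Matrix (Fin α) (Fin α) F).rank ≤ 1 := by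
  -- Extract coefficients for each column of Γ₁.
  have hmem : ∀ j : Fin α, (fun i => Γ₁ i j) ∈
      Submodule.span F (Set.range fun j => fun i => (Matrix.fromCols Γ₂ Γ₃) i j) :=
    fun j => h3 (Submodule.subset_span ⟨j, rfl⟩)
  have hex : ∀ j : Fin α, ∃ c : ({j : Fin k // j ≠ (⟨0, hk⟩ : Fin k)} ⊕ Fin α) → F,
      (∑ s, c s • fun i => (Matrix.fromCols Γ₂ Γ₃) i s) = fun i => Γ₁ i j := by
    intro j
    exact (Submodule.mem_span_range_iff_exists_fun F).1 (hmem j)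
  choose c hc using hex
  -- pointwise form
  have hc' : ∀ (j : Fin α) (i : Fin k) (a : Fin α),
      (∑ j' : {j : Fin k // j ≠ (⟨0, hk⟩ : Fin k)}, c j (Sum.inl j') * Γ₂ (i, a) j') +
      (∑ m : Fin α, c j (Sum.inr m) * Γ₃ (i, a) m) = Γ₁ (i, a) j := by
    intro j i a
    have := congrFun (hc j) (i, a)
    simpa [Fintype.sum_sum_type, Matrix.fromCols] using this
  -- D is a right inverse of the first block of Γ₃
  set D : Matrix (Fin α) (Fin α) F := fun m j => c j (Sum.inr m) with hD
  set G0 : Matrix (Fin α) (Fin α) F := fun a m => Γ₃ ((⟨0, hk⟩ : Fin k), a) m with hG0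
  have hG0D : G0 * D = 1 := by
    ext a j
    have h := hc' j (⟨0, hk⟩ : Fin k) a
    have hzero : (∑ j' : {j : Fin k // j ≠ (⟨0, hk⟩ : Fin k)},
        c j (Sum.inl j') * Γ₂ ((⟨0, hk⟩ : Fin k), a) j') = 0 := by
      apply Finset.sum_eq_zero
      intro j' _
      rw [h2 _ a j' (Ne.symm j'.prop), mul_zero]
    rw [hzero, zero_add, h1] at h
    rw [Matrix.mul_apply]; simp only [Matrix.one_apply, hD, hG0]
    rw [show (∑ m, Γ₃ ((⟨0, hk⟩ : Fin k), a) m * c j (Sum.inr m))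
        = ∑ m, c j (Sum.inr m) * Γ₃ ((⟨0, hk⟩ : Fin k), a) m by simp [mul_comm]]
    rw [h]
    by_cases hja : a = j <;> simp [hja, eq_comm]
  have hDG0 : D * G0 = 1 := mul_eq_one_comm.1 hG0D
  intro i hi
  set ii : {j : Fin k // j ≠ (⟨0, hk⟩ : Fin k)} := ⟨i, hi⟩ with hii
  set w : Fin α → F := fun a => Γ₂ (i, a) ii with hw
  set Gi : Matrix (Fin α) (Fin α) F := fun a m => Γ₃ (i, a) m with hGi
  -- each column of Gi * D is a multiple of w
  have hGiD : ∀ a j, (Gi * D) a j = (-(c j (Sum.inl ii))) * w a := by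
    intro a j
    have h := hc' j i a
    have hsum : (∑ j' : {j : Fin k // j ≠ (⟨0, hk⟩ : Fin k)}, c j (Sum.inl j') * Γ₂ (i, a) j')
        = c j (Sum.inl ii) * w a := by
      rw [← Finset.sum_subset (Finset.subset_univ {ii})]
      · simp [hw]
      · intro j' _ hj'
        simp only [Finset.mem_singleton] at hj'
        rw [h2 i a j' (fun he => hj' (Subtype.ext he.symm)), mul_zero]
    rw [hsum, h1] at h
    have hne : i ≠ (⟨0, hk⟩ : Fin k) := hi
    simp only [hne, false_and, if_false] at h
    rw [Matrix.mul_apply]; simp only [hGi, hD]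
    have heq : (∑ m, Γ₃ (i, a) m * c j (Sum.inr m))
        = ∑ m, c j (Sum.inr m) * Γ₃ (i, a) m := by simp [mul_comm]
    rw [heq]
    linear_combination h
  -- hence each column of Gi is a multiple of w
  have hcol : ∀ j a, Γ₃ (i, a) j =
      (∑ m, (-(c m (Sum.inl ii))) * G0 m j) * w a := by
    intro j a
    have hG : Gi a j = (Gi * D * G0) a j := by rw [Matrix.mul_assoc, hDG0, Matrix.mul_one]
    rw [show Γ₃ (i, a) j = Gi a j from rfl, hG, Matrix.mul_apply]
    rw [Finset.sum_mul]
    apply Finset.sum_congr rfl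
    intro m _
    rw [hGiD]
    ring
  constructor
  · rw [Submodule.span_le]
    rintro x ⟨j, rfl⟩
    show (fun a => Γ₃ (i, a) j) ∈
      (Submodule.span F (Set.range fun j : {j : Fin k // j ≠ (⟨0, hk⟩ : Fin k)} =>
        fun a => Γ₂ (i, a) j) : Set (Fin α → F))
    have hx : (fun a => Γ₃ (i, a) j) = (∑ m, (-(c m (Sum.inl ii))) * G0 m j) • w := by
      funext a; rw [hcol]; simp [smul_eq_mul]
    rw [hx]
    exact Submodule.smul_mem _ _ (Submodule.subset_span ⟨ii, rfl⟩)
  · -- rank ≤ 1 via factorization through a one-column matrix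
    have hfact : (Matrix.of (fun a j => Γ₃ (i, a) j) : Matrix (Fin α) (Fin α) F)
        = (Matrix.of fun a (_ : Unit) => w a) *
          (Matrix.of fun (_ : Unit) j => ∑ m, (-(c m (Sum.inl ii))) * G0 m j) := by
      ext a j
      simp only [Matrix.mul_apply, Matrix.of_apply, Finset.univ_unique, Finset.sum_singleton]
      rw [hcol]; ring
    rw [hfact]
    calc ((Matrix.of fun a (_ : Unit) => w a) *
          (Matrix.of fun (_ : Unit) j => ∑ m, (-(c m (Sum.inl ii))) * G0 m j)).rank
        ≤ (Matrix.of fun a (_ : Unit) => w a).rank := Matrix.rank_mul_le_left _ _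
      _ ≤ Fintype.card Unit := Matrix.rank_le_card_width _
      _ = 1 := Fintype.card_unit
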